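/- Let ≺ ∈ IPos_p. A partition [p] = X ⊔ Y is a total cut of ≺ if and only if it is a total cut of WOIPd(≺). Moreover, if (X,Y) is a total cut of ≺, then (WOIPd ≺)_X = WOIPd(≺_X) and (WOIPd ≺)_Y = WOIPd(≺_Y). The same statements hold with WOIPd replaced by IWOIPid or by DWOIPdd. -/

import Mathlib

namespace IntegerRelations

/-- An integer relation of size `p` is a reflexive binary relation on `Fin p`,
encoded as a set of pairs; `IsIRel R` says that `R` is reflexive. -/
def IsIRel {p : ℕ} (R : Set (Fin p × Fin p)) : Prop :=
  ∀ i : Fin p, (i, i) ∈ R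

/-- The increasing subrelation `Inc R`. -/
def inc {p : ℕ} (R : Set (Fin p × Fin p)) : Set (Fin p × Fin p) :=
  {x ∈ R | x.1 < x.2}

/-- The decreasing subrelation `Dec R`. -/
def dec {p : ℕ} (R : Set (Fin p × Fin p)) : Set (Fin p × Fin p) :=
  {x ∈ R | x.2 < x.1}

/-- The weak order: `R ≼ S` iff `Inc R ⊇ Inc S` and `Dec R ⊆ Dec S`. -/
def WOle {p : ℕ} (R S : Set (Fin p × Fin p)) : Prop :=
  inc S ⊆ inc R ∧ dec R ⊆ dec S

/-- Standardized restriction of a relation to a subset `X` of cardinality `k`. -/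
def restrict {p k : ℕ} (R : Set (Fin p × Fin p)) (X : Finset (Fin p))
    (h : X.card = k) : Set (Fin k × Fin k) :=
  {x | ((X.orderIsoOfFin h x.1 : Fin p), (X.orderIsoOfFin h x.2 : Fin p)) ∈ R}

/-- Standardized restriction of a relation to the block of `k` consecutive
positions starting at offset `o` (`0`-indexed). -/
def restrictRange {p : ℕ} (R : Set (Fin p × Fin p)) (o k : ℕ) :
    Set (Fin k × Fin k) :=
  {x | ∃ (h₁ : o + (x.1 : ℕ) < p) (h₂ : o + (x.2 : ℕ) < p),
      ((⟨o + (x.1 : ℕ), h₁⟩ : Fin p), (⟨o + (x.2 : ℕ), h₂⟩ : Fin p)) ∈ R}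

/-- The relation `R` placed on the first `m` values of `[m+n]`. -/
def shiftL {m n : ℕ} (R : Set (Fin m × Fin m)) :
    Set (Fin (m + n) × Fin (m + n)) :=
  {x | ∃ y ∈ R, x = (Fin.castAdd n y.1, Fin.castAdd n y.2)}

/-- The relation `S` shifted to the last `n` values of `[m+n]`. -/
def shiftR {m n : ℕ} (S : Set (Fin n × Fin n)) :
    Set (Fin (m + n) × Fin (m + n)) :=
  {x | ∃ y ∈ S, x = (Fin.natAdd m y.1, Fin.natAdd m y.2)}

/-- The full block `[m] × [n̄]`. -/
def lowHigh (m n : ℕ) : Set (Fin (m + n) × Fin (m + n)) :=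
  {x | (x.1 : ℕ) < m ∧ m ≤ (x.2 : ℕ)}

/-- The full block `[n̄] × [m]`. -/
def highLow (m n : ℕ) : Set (Fin (m + n) × Fin (m + n)) :=
  {x | m ≤ (x.1 : ℕ) ∧ (x.2 : ℕ) < m}

/-- The shifted shuffle `R ⧢ S` of two integer relations. -/
def shiftedShuffle {m n : ℕ} (R : Set (Fin m × Fin m)) (S : Set (Fin n × Fin n)) :
    Set (Set (Fin (m + n) × Fin (m + n))) :=
  {T | ∃ I D : Set (Fin (m + n) × Fin (m + n)),
      I ⊆ lowHigh m n ∧ D ⊆ highLow m n ∧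
      T = shiftL R ∪ shiftR S ∪ I ∪ D}

/-- `underprod R S = R ∪ S̄ ∪ ([m] × [n̄])`. -/
def underprod {m n : ℕ} (R : Set (Fin m × Fin m)) (S : Set (Fin n × Fin n)) :
    Set (Fin (m + n) × Fin (m + n)) :=
  shiftL R ∪ shiftR S ∪ lowHigh m n

/-- `overprod R S = R ∪ S̄ ∪ ([n̄] × [m])`. -/
def overprod {m n : ℕ} (R : Set (Fin m × Fin m)) (S : Set (Fin n × Fin n)) :
    Set (Fin (m + n) × Fin (m + n)) :=
  shiftL R ∪ shiftR S ∪ highLow m n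

/-- A total cut `(X, Y)` of a relation `T`. -/
def IsTotalCut {p : ℕ} (T : Set (Fin p × Fin p)) (X Y : Finset (Fin p)) : Prop :=
  (∀ i : Fin p, i ∈ X ∨ i ∈ Y) ∧ Disjoint X Y ∧
    ∀ x ∈ X, ∀ y ∈ Y, (x, y) ∈ T ∧ (y, x) ∉ T

/-- The convolution `R ∗ S` of two integer relations. -/
def convolution {m n : ℕ} (R : Set (Fin m × Fin m)) (S : Set (Fin n × Fin n)) :
    Set (Set (Fin (m + n) × Fin (m + n))) :=
  {T | ∃ (X Y : Finset (Fin (m + n))) (hX : X.card = m) (hY : Y.card = n),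
      IsTotalCut T X Y ∧ restrict T X hX = R ∧ restrict T Y hY = S}

/-- An integer poset: a reflexive, antisymmetric and transitive integer relation. -/
def IsIPos {p : ℕ} (T : Set (Fin p × Fin p)) : Prop :=
  IsIRel T ∧ (∀ a b : Fin p, (a, b) ∈ T → (b, a) ∈ T → a = b) ∧
    ∀ a b c : Fin p, (a, b) ∈ T → (b, c) ∈ T → (a, c) ∈ T

/-- A total order: an integer poset in which any two elements are comparable
(these are exactly the weak order element posets, `WOEP`). -/
def IsITotal {p : ℕ} (T : Set (Fin p × Fin p)) : Prop :=
  IsIPos T ∧ ∀ a b : Fin p, (a, b) ∈ T ∨ (b, a) ∈ T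

/-- `T` admits a primitive cut at `k` (here positions are `0`-indexed, so the
`1`-indexed condition `i ≤ k < j` reads `i < k ≤ j`). -/
def HasPrimitiveCutAt {p : ℕ} (T : Set (Fin p × Fin p)) (k : ℕ) : Prop :=
  ∀ i j : Fin p, (i : ℕ) < k → k ≤ (j : ℕ) → (i, j) ∈ T ∧ (j, i) ∉ T

/-- `T` is under-indecomposable: no non-trivial primitive cut. -/
def UnderIndecomposable {p : ℕ} (T : Set (Fin p × Fin p)) : Prop :=
  ∀ k : ℕ, 0 < k → k < p → ¬ HasPrimitiveCutAt T k

/-- Membership in `IWOIP`. -/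
def InIWOIP {p : ℕ} (T : Set (Fin p × Fin p)) : Prop :=
  IsIPos T ∧ ∀ a b c : Fin p, a < b → b < c → (a, c) ∈ T → (a, b) ∈ T ∨ (b, c) ∈ T

/-- Membership in `DWOIP`. -/
def InDWOIP {p : ℕ} (T : Set (Fin p × Fin p)) : Prop :=
  IsIPos T ∧ ∀ a b c : Fin p, a < b → b < c → (c, a) ∈ T → (b, a) ∈ T ∨ (c, b) ∈ T

/-- Membership in `WOIP = IWOIP ∩ DWOIP`. -/
def InWOIP {p : ℕ} (T : Set (Fin p × Fin p)) : Prop := InIWOIP T ∧ InDWOIP T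

/-- Membership in `WOFP`. -/
def InWOFP {p : ℕ} (T : Set (Fin p × Fin p)) : Prop :=
  InWOIP T ∧ ∀ a b c : Fin p, a < b → b < c → (a, c) ∉ T → (c, a) ∉ T →
    (((a, b) ∈ T ↔ (c, b) ∈ T) ∧ ((b, a) ∈ T ↔ (b, c) ∈ T))

/-- The `IWOIP` increasing deletion. -/
def IWOIPid {p : ℕ} (T : Set (Fin p × Fin p)) : Set (Fin p × Fin p) :=
  T \ {x | x.1 < x.2 ∧ ∃ l : List (Fin p), l ≠ [] ∧
      List.Chain (fun a b : Fin p => a < b ∧ (a, b) ∉ T) x.1 (l ++ [x.2])}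

/-- The `DWOIP` decreasing deletion. -/
def DWOIPdd {p : ℕ} (T : Set (Fin p × Fin p)) : Set (Fin p × Fin p) :=
  T \ {x | x.2 < x.1 ∧ ∃ l : List (Fin p), l ≠ [] ∧
      List.Chain (fun a b : Fin p => a < b ∧ (b, a) ∉ T) x.2 (l ++ [x.1])}

/-- The `WOIP` deletion. -/
def WOIPd {p : ℕ} (T : Set (Fin p × Fin p)) : Set (Fin p × Fin p) :=
  IWOIPid (DWOIPdd T)

/-- The chain poset `≺_σ` of a permutation: `u ≺_σ v` iff `σ⁻¹ u ≤ σ⁻¹ v`. -/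
def chainPoset {p : ℕ} (σ : Equiv.Perm (Fin p)) : Set (Fin p × Fin p) :=
  {x | σ.symm x.1 ≤ σ.symm x.2}

/-- The shifted shuffle of two permutations. -/
def permShiftedShuffle {m n : ℕ} (σ : Equiv.Perm (Fin m)) (τ : Equiv.Perm (Fin n)) :
    Set (Equiv.Perm (Fin (m + n))) :=
  {ρ | (∀ u v : Fin m,
        ρ.symm (Fin.castAdd n u) < ρ.symm (Fin.castAdd n v) ↔ σ.symm u < σ.symm v) ∧
      ∀ u v : Fin n,
        ρ.symm (Fin.natAdd m u) < ρ.symm (Fin.natAdd m v) ↔ τ.symm u < τ.symm v}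

/-- The convolution of two permutations. -/
def permConvolution {m n : ℕ} (σ : Equiv.Perm (Fin m)) (τ : Equiv.Perm (Fin n)) :
    Set (Equiv.Perm (Fin (m + n))) :=
  {ρ | (∀ i j : Fin m, ρ (Fin.castAdd n i) < ρ (Fin.castAdd n j) ↔ σ i < σ j) ∧
      ∀ i j : Fin n, ρ (Fin.natAdd m i) < ρ (Fin.natAdd m j) ↔ τ i < τ j}

/-- Relabelling of a relation along a bijection. -/
def relabel {p q : ℕ} (e : Fin p ≃ Fin q) (T : Set (Fin p × Fin p)) :
    Set (Fin q × Fin q) :=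
  {x | (e.symm x.1, e.symm x.2) ∈ T}

/-- The diagonal `Δ_p`. -/
def diagonal (p : ℕ) : Set (Fin p × Fin p) := {x | x.1 = x.2}


/-! ### Auxiliary lemmas -/

private lemma chain_strengthen {α : Type*} {R : α → α → Prop} {P : α → Prop}
    (hP : ∀ a b, P a → R a b → P b) :
    ∀ {l : List α} {a : α}, P a → List.Chain R a l →
      List.Chain (fun u v => R u v ∧ P u ∧ P v) a l := by
  intro l
  induction l with
  | nil => intro a _ _; exact List.Chain.nil
  | cons b t ih =>
      intro a ha h
      cases h with
      | cons_cons hab ht =>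
          exact List.Chain.cons ⟨hab, ha, hP _ _ ha hab⟩ (ih (hP _ _ ha hab) ht)

private lemma chain_last {α : Type*} {R : α → α → Prop} {P : α → Prop}
    (hP : ∀ a b, P a → R a b → P b) :
    ∀ {l : List α} {a c : α}, P a → List.Chain R a (l ++ [c]) → P c := by
  intro l
  induction l with
  | nil =>
      intro a c ha h
      cases h with | cons_cons hac _ => exact hP _ _ ha hac
  | cons b t ih =>
      intro a c ha h
      cases h with | cons_cons hab ht => exact ih (hP _ _ ha hab) ht

private lemma chain_strengthen_rev {α : Type*} {R : α → α → Prop} {P : α → Prop}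
    (hP : ∀ a b, P b → R a b → P a) :
    ∀ {l : List α} {a c : α}, P c → List.Chain R a (l ++ [c]) →
      P a ∧ List.Chain (fun u v => R u v ∧ P u ∧ P v) a (l ++ [c]) := by
  intro l
  induction l with
  | nil =>
      intro a c hc h
      cases h with
      | cons_cons hac ht =>
          exact ⟨hP _ _ hc hac, List.Chain.cons ⟨hac, hP _ _ hc hac, hc⟩ List.Chain.nil⟩
  | cons b t ih =>
      intro a c hc h
      cases h with
      | cons_cons hab ht =>
          obtain ⟨hb, ht'⟩ := ih hc ht
          exact ⟨hP _ _ hb hab, List.Chain.cons ⟨hab, hP _ _ hb hab, hb⟩ ht'⟩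

private lemma orderIso_lt {p k : ℕ} (Z : Finset (Fin p)) (hk : Z.card = k) (i j : Fin k) :
    (Z.orderIsoOfFin hk i : Fin p) < (Z.orderIsoOfFin hk j : Fin p) ↔ i < j := by
  rw [Subtype.coe_lt_coe, OrderIso.lt_iff_lt]

private lemma chain_iff {p k : ℕ} (Z : Finset (Fin p)) (hk : Z.card = k)
    (s : Fin p → Fin p → Prop) (s' : Fin k → Fin k → Prop)
    (hs : ∀ a b, s' a b ↔ s (Z.orderIsoOfFin hk a : Fin p) (Z.orderIsoOfFin hk b : Fin p))
    (hprop : (∀ a b, a ∈ Z → s a b → b ∈ Z) ∨ (∀ a b, b ∈ Z → s a b → a ∈ Z))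
    (i j : Fin k) :
    (∃ l : List (Fin p), l ≠ [] ∧
        List.Chain s (Z.orderIsoOfFin hk i : Fin p) (l ++ [(Z.orderIsoOfFin hk j : Fin p)])) ↔
      ∃ l : List (Fin k), l ≠ [] ∧ List.Chain s' i (l ++ [j]) := by
  set σ := Z.orderIsoOfFin hk with hσ
  constructor
  · rintro ⟨l, hl, hc⟩
    have hstr : List.Chain (fun u v => s u v ∧ u ∈ Z ∧ v ∈ Z) (σ i : Fin p)
        (l ++ [(σ j : Fin p)]) := by
      rcases hprop with hf | hb
      · exact chain_strengthen hf (σ i).2 hc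
      · exact (chain_strengthen_rev hb (σ j).2 hc).2
    set g : Fin p → Fin k := fun c => if h : c ∈ Z then σ.symm ⟨c, h⟩ else i with hg
    have hmap : ∀ a b : Fin p, (s a b ∧ a ∈ Z ∧ b ∈ Z) → s' (g a) (g b) := by
      rintro a b ⟨hab, ha, hb⟩
      rw [hs]
      simp only [hg, dif_pos ha, dif_pos hb, OrderIso.apply_symm_apply]
      exact hab
    have hmapped : List.Chain _ _ _ := List.isChain_cons_map_of_isChain_cons g hmap hstr
    have hgi : g (σ i : Fin p) = i := by
      simp only [hg, dif_pos (σ i).2, Subtype.coe_eta, OrderIso.symm_apply_apply]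
    have hgj : g (σ j : Fin p) = j := by
      simp only [hg, dif_pos (σ j).2, Subtype.coe_eta, OrderIso.symm_apply_apply]
    refine ⟨l.map g, by simpa using hl, ?_⟩
    simpa [hgi, hgj] using hmapped
  · rintro ⟨l, hl, hc⟩
    refine ⟨l.map (fun a => (σ a : Fin p)), by simpa using hl, ?_⟩
    have : List.Chain _ _ _ := List.isChain_cons_map_of_isChain_cons (fun a => (σ a : Fin p))
      (fun a b h => (hs a b).1 h) hc
    simpa using this

private lemma propI_X {p : ℕ} {T : Set (Fin p × Fin p)} {X Y : Finset (Fin p)}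
    (h : IsTotalCut T X Y) :
    ∀ a b : Fin p, a ∈ X → (a < b ∧ (a, b) ∉ T) → b ∈ X := by
  rintro a b ha ⟨-, hab⟩
  rcases h.1 b with hb | hb
  · exact hb
  · exact absurd (h.2.2 a ha b hb).1 hab

private lemma propI_Y {p : ℕ} {T : Set (Fin p × Fin p)} {X Y : Finset (Fin p)}
    (h : IsTotalCut T X Y) :
    ∀ a b : Fin p, b ∈ Y → (a < b ∧ (a, b) ∉ T) → a ∈ Y := by
  rintro a b hb ⟨-, hab⟩
  rcases h.1 a with ha | ha
  · exact absurd (h.2.2 a ha b hb).1 hab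
  · exact ha

private lemma propD_X {p : ℕ} {T : Set (Fin p × Fin p)} {X Y : Finset (Fin p)}
    (h : IsTotalCut T X Y) :
    ∀ a b : Fin p, b ∈ X → (a < b ∧ (b, a) ∉ T) → a ∈ X := by
  rintro a b hb ⟨-, hba⟩
  rcases h.1 a with ha | ha
  · exact ha
  · exact absurd (h.2.2 b hb a ha).1 hba

private lemma propD_Y {p : ℕ} {T : Set (Fin p × Fin p)} {X Y : Finset (Fin p)}
    (h : IsTotalCut T X Y) :
    ∀ a b : Fin p, a ∈ Y → (a < b ∧ (b, a) ∉ T) → b ∈ Y := by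
  rintro a b ha ⟨-, hba⟩
  rcases h.1 b with hb | hb
  · exact absurd (h.2.2 b hb a ha).1 hba
  · exact hb

private lemma cut_fwd_I {p : ℕ} {T : Set (Fin p × Fin p)} {X Y : Finset (Fin p)}
    (h : IsTotalCut T X Y) : IsTotalCut (IWOIPid T) X Y := by
  obtain ⟨hcov, hdis, hrel⟩ := h
  refine ⟨hcov, hdis, fun x hx y hy => ?_⟩
  obtain ⟨hxy, hyx⟩ := hrel x hx y hy
  refine ⟨⟨hxy, ?_⟩, fun hm => hyx hm.1⟩
  rintro ⟨hlt, l, hl, hc⟩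
  have hyX : y ∈ X := chain_last (propI_X ⟨hcov, hdis, hrel⟩) hx hc
  exact (Finset.disjoint_left.mp hdis hyX) hy

private lemma cut_fwd_D {p : ℕ} {T : Set (Fin p × Fin p)} {X Y : Finset (Fin p)}
    (h : IsTotalCut T X Y) : IsTotalCut (DWOIPdd T) X Y := by
  obtain ⟨hcov, hdis, hrel⟩ := h
  refine ⟨hcov, hdis, fun x hx y hy => ?_⟩
  obtain ⟨hxy, hyx⟩ := hrel x hx y hy
  refine ⟨⟨hxy, ?_⟩, fun hm => hyx hm.1⟩
  rintro ⟨hlt, l, hl, hc⟩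
  have hxY : x ∈ Y := chain_last (propD_Y ⟨hcov, hdis, hrel⟩) hy hc
  exact (Finset.disjoint_left.mp hdis hx) hxY

private lemma cut_bwd {p : ℕ} {T D : Set (Fin p × Fin p)} {X Y : Finset (Fin p)}
    (hT : IsIPos T) (hsub : D ⊆ T) (h : IsTotalCut D X Y) : IsTotalCut T X Y := by
  obtain ⟨hcov, hdis, hrel⟩ := h
  refine ⟨hcov, hdis, fun x hx y hy => ?_⟩
  have hxy : (x, y) ∈ T := hsub (hrel x hx y hy).1
  refine ⟨hxy, fun hyx => ?_⟩
  have hne : x = y := hT.2.1 x y hxy hyx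
  exact (Finset.disjoint_left.mp hdis hx) (hne ▸ hy)

private lemma restrict_IWOIPid {p k : ℕ} (T : Set (Fin p × Fin p)) (Z : Finset (Fin p))
    (hk : Z.card = k)
    (hprop : (∀ a b : Fin p, a ∈ Z → (a < b ∧ (a, b) ∉ T) → b ∈ Z) ∨
      (∀ a b : Fin p, b ∈ Z → (a < b ∧ (a, b) ∉ T) → a ∈ Z)) :
    restrict (IWOIPid T) Z hk = IWOIPid (restrict T Z hk) := by
  ext ⟨i, j⟩
  have hch := chain_iff Z hk (fun a b => a < b ∧ (a, b) ∉ T)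
    (fun a b => a < b ∧ (a, b) ∉ restrict T Z hk)
    (fun a b => by
      simp only [restrict, Set.mem_setOf_eq]
      exact and_congr (orderIso_lt Z hk a b).symm Iff.rfl) hprop i j
  simp only [restrict, IWOIPid, Set.mem_diff, Set.mem_setOf_eq]
  rw [orderIso_lt Z hk i j, hch]
  exact Iff.rfl

private lemma restrict_DWOIPdd {p k : ℕ} (T : Set (Fin p × Fin p)) (Z : Finset (Fin p))
    (hk : Z.card = k)
    (hprop : (∀ a b : Fin p, a ∈ Z → (a < b ∧ (b, a) ∉ T) → b ∈ Z) ∨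
      (∀ a b : Fin p, b ∈ Z → (a < b ∧ (b, a) ∉ T) → a ∈ Z)) :
    restrict (DWOIPdd T) Z hk = DWOIPdd (restrict T Z hk) := by
  ext ⟨i, j⟩
  have hch := chain_iff Z hk (fun a b => a < b ∧ (b, a) ∉ T)
    (fun a b => a < b ∧ (b, a) ∉ restrict T Z hk)
    (fun a b => by
      simp only [restrict, Set.mem_setOf_eq]
      exact and_congr (orderIso_lt Z hk a b).symm Iff.rfl) hprop j i
  simp only [restrict, DWOIPdd, Set.mem_diff, Set.mem_setOf_eq]
  rw [orderIso_lt Z hk j i, hch]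
  exact Iff.rfl

/-- total cuts and the `WOIP`, `IWOIP`, `DWOIP` deletions. -/
theorem WOIPd_totalCut (p : ℕ) (T : Set (Fin p × Fin p)) (hT : IsIPos T)
    (X Y : Finset (Fin p)) :
    ((IsTotalCut T X Y ↔ IsTotalCut (WOIPd T) X Y) ∧
      (IsTotalCut T X Y →
        restrict (WOIPd T) X rfl = WOIPd (restrict T X rfl) ∧
        restrict (WOIPd T) Y rfl = WOIPd (restrict T Y rfl))) ∧
    ((IsTotalCut T X Y ↔ IsTotalCut (IWOIPid T) X Y) ∧
      (IsTotalCut T X Y →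
        restrict (IWOIPid T) X rfl = IWOIPid (restrict T X rfl) ∧
        restrict (IWOIPid T) Y rfl = IWOIPid (restrict T Y rfl))) ∧
    ((IsTotalCut T X Y ↔ IsTotalCut (DWOIPdd T) X Y) ∧
      (IsTotalCut T X Y →
        restrict (DWOIPdd T) X rfl = DWOIPdd (restrict T X rfl) ∧
        restrict (DWOIPdd T) Y rfl = DWOIPdd (restrict T Y rfl))) := by
  have hsub : WOIPd T ⊆ T := fun x hx => hx.1.1
  have hsubI : IWOIPid T ⊆ T := fun x hx => hx.1
  have hsubD : DWOIPdd T ⊆ T := fun x hx => hx.1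
  refine ⟨⟨⟨fun h => cut_fwd_I (cut_fwd_D h), fun h => cut_bwd hT hsub h⟩, ?_⟩,
    ⟨⟨fun h => cut_fwd_I h, fun h => cut_bwd hT hsubI h⟩, ?_⟩,
    ⟨⟨fun h => cut_fwd_D h, fun h => cut_bwd hT hsubD h⟩, ?_⟩⟩
  · intro h
    have hD := cut_fwd_D h
    constructor
    · show restrict (IWOIPid (DWOIPdd T)) X rfl = IWOIPid (DWOIPdd (restrict T X rfl))
      rw [restrict_IWOIPid _ X rfl (Or.inl (propI_X hD)),
        restrict_DWOIPdd _ X rfl (Or.inr (propD_X h))]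
    · show restrict (IWOIPid (DWOIPdd T)) Y rfl = IWOIPid (DWOIPdd (restrict T Y rfl))
      rw [restrict_IWOIPid _ Y rfl (Or.inr (propI_Y hD)),
        restrict_DWOIPdd _ Y rfl (Or.inl (propD_Y h))]
  · intro h
    exact ⟨restrict_IWOIPid _ X rfl (Or.inl (propI_X h)),
      restrict_IWOIPid _ Y rfl (Or.inr (propI_Y h))⟩
  · intro h
    exact ⟨restrict_DWOIPdd _ X rfl (Or.inr (propD_X h)),
      restrict_DWOIPdd _ Y rfl (Or.inl (propD_Y h))⟩

end IntegerRelations
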